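/- Let {B_j}_{j≥1} be i.i.d. real random variables with E[log⁺|B₁|] < ∞, and fix δ > 0, K > 0 with P[log|B₁| > K] < 1/2. Then for every n ≥ 1, log P[|B_j| ≤ e^{δj+K} for all j ≤ n] ≥ −2·δ^{-1}·E[(log|B₁| − K)₊]; in particular P[|B_j| ≤ e^{δj+K} for all j ≥ 1] → 1 as K → ∞. -/

import Mathlib

open MeasureTheory ProbabilityTheory Filter Real Set

/-- Tail function of a distribution on ℝ. -/
noncomputable def tailFun (ν : MeasureTheory.Measure ℝ) (x : ℝ) : ℝ := (ν (Set.Ioi x)).toReal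

/-- A distribution on ℝ is long-tailed. -/
def IsLongTailed (ν : MeasureTheory.Measure ℝ) : Prop :=
  (∀ x : ℝ, 0 < tailFun ν x) ∧
    ∀ y : ℝ, Filter.Tendsto (fun x => tailFun ν (x + y) / tailFun ν x) Filter.atTop (nhds 1)

/-- Convolution of two measures on ℝ. -/
noncomputable def convMeas (μ ν : MeasureTheory.Measure ℝ) : MeasureTheory.Measure ℝ :=
  (μ.prod ν).map (fun p => p.1 + p.2)

/-- A distribution on ℝ is subexponential. -/
def IsSubexponential (ν : MeasureTheory.Measure ℝ) : Prop :=
  IsLongTailed ν ∧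
    Filter.Tendsto (fun x => tailFun (convMeas ν ν) x / tailFun ν x) Filter.atTop (nhds 2)

lemma log_max_abs (x : ℝ) : Real.log (max |x| 1) = max (Real.log |x|) 0 := by
  rcases le_or_gt |x| 1 with h | h
  · rw [max_eq_right h, Real.log_one, max_eq_right (Real.log_nonpos (abs_nonneg x) h)]
  · rw [max_eq_left h.le, max_eq_left (Real.log_pos h).le]

lemma exp_neg_two_le (p : ℝ) (hp0 : 0 ≤ p) (hp : p ≤ 1/2) : Real.exp (-(2*p)) ≤ 1 - p := by
  have h1 : 1 + 2*p ≤ Real.exp (2*p) := by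
    have := Real.add_one_le_exp (2*p); linarith
  have h2 : Real.exp (-(2*p)) = (Real.exp (2*p))⁻¹ := Real.exp_neg _
  rw [h2]
  have hpos : (0:ℝ) < 1 + 2*p := by linarith
  have h3 : (Real.exp (2*p))⁻¹ ≤ (1+2*p)⁻¹ := by
    apply inv_anti₀ hpos h1
  refine h3.trans ?_
  rw [inv_le_iff_one_le_mul₀ hpos]
  nlinarith

lemma core {Ω : Type*} [MeasurableSpace Ω]
    (P : Measure Ω) [IsProbabilityMeasure P]
    (B : ℕ → Ω → ℝ) (hmeas : ∀ n, Measurable (B n))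
    (hiid : iIndepFun B P)
    (hid : ∀ n, IdentDistrib (B n) (B 1) P P)
    (hintB : Integrable (fun ω => Real.log (max |B 1 ω| 1)) P)
    (δ : ℝ) (hδ : 0 < δ) (K : ℝ) (hK : 0 < K)
    (hhalf : (P {ω | Real.log |B 1 ω| > K}).toReal < 1 / 2) (n : ℕ) :
    Real.exp (-2 * δ⁻¹ * (∫ ω, max (Real.log |B 1 ω| - K) 0 ∂P)) ≤
      (P {ω | ∀ j : ℕ, 1 ≤ j → j ≤ n →
        |B j ω| ≤ Real.exp (δ * (j : ℝ) + K)}).toReal := by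
  set X : Ω → ℝ := fun ω => max (Real.log |B 1 ω| - K) 0 with hX
  have hXmeas : Measurable X :=
    ((Real.measurable_log.comp (hmeas 1).abs).sub measurable_const).max measurable_const
  have hXnonneg : ∀ ω, 0 ≤ X ω := fun ω => le_max_right _ _
  have hXle : ∀ ω, X ω ≤ Real.log (max |B 1 ω| 1) := by
    intro ω
    rw [log_max_abs]
    exact max_le_max (by linarith) le_rfl
  have hXint : Integrable X P := by
    refine hintB.mono' hXmeas.aestronglyMeasurable (ae_of_all _ fun ω => ?_)
    rw [Real.norm_eq_abs, abs_of_nonneg (hXnonneg ω)]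
    exact hXle ω
  -- the sets
  set s : ℕ → Set ℝ := fun j => {x | |x| ≤ Real.exp (δ * (j : ℝ) + K)} with hs
  have hsmeas : ∀ j, MeasurableSet (s j) :=
    fun j => measurableSet_le measurable_abs measurable_const
  have hEeq : {ω | ∀ j : ℕ, 1 ≤ j → j ≤ n → |B j ω| ≤ Real.exp (δ * (j : ℝ) + K)}
      = ⋂ j ∈ Finset.Icc 1 n, B j ⁻¹' s j := by
    ext ω
    simp only [mem_setOf_eq, mem_iInter, mem_preimage, hs, Finset.mem_Icc, and_imp]
  have hprod : P (⋂ j ∈ Finset.Icc 1 n, B j ⁻¹' s j)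
      = ∏ j ∈ Finset.Icc 1 n, P (B j ⁻¹' s j) :=
    hiid.meas_biInter (fun i _ => ⟨s i, hsmeas i, rfl⟩)
  have hident : ∀ j : ℕ, P (B j ⁻¹' s j) = P (B 1 ⁻¹' s j) :=
    fun j => (hid j).measure_mem_eq (hsmeas j)
  set p : ℕ → ℝ := fun j => (P ((B 1 ⁻¹' s j)ᶜ)).toReal with hp
  have hcompl : ∀ j, (P (B 1 ⁻¹' s j)).toReal = 1 - p j := by
    intro j
    have h := prob_compl_eq_one_sub (μ := P) ((hsmeas j).preimage (hmeas 1))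
    have h2 : (P ((B 1 ⁻¹' s j)ᶜ)).toReal = 1 - (P (B 1 ⁻¹' s j)).toReal := by
      rw [h, ENNReal.toReal_sub_of_le prob_le_one ENNReal.one_ne_top, ENNReal.toReal_one]
    simp only [hp]
    rw [h2]; ring
  have hsub : ∀ j : ℕ, (B 1 ⁻¹' s j)ᶜ ⊆ {ω | Real.log |B 1 ω| > K} := by
    intro j ω hω
    simp only [mem_compl_iff, mem_preimage, hs, mem_setOf_eq, not_le] at hω
    have hpos : (0:ℝ) < |B 1 ω| := lt_trans (Real.exp_pos _) hω
    have := (Real.lt_log_iff_exp_lt hpos).2 hω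
    have hj : 0 ≤ δ * (j : ℝ) := mul_nonneg hδ.le (Nat.cast_nonneg j)
    simp only [mem_setOf_eq]; linarith
  have hp_half : ∀ j, p j ≤ 1 / 2 := by
    intro j
    refine le_of_lt (lt_of_le_of_lt ?_ hhalf)
    exact ENNReal.toReal_mono (measure_ne_top P _) (measure_mono (hsub j))
  have hp_nonneg : ∀ j, 0 ≤ p j := fun j => ENNReal.toReal_nonneg
  -- sum bound
  have hsub2 : ∀ j : ℕ, (B 1 ⁻¹' s j)ᶜ ⊆ {ω | δ * (j : ℝ) ≤ X ω} := by
    intro j ω hω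
    simp only [mem_compl_iff, mem_preimage, hs, mem_setOf_eq, not_le] at hω
    have hpos : (0:ℝ) < |B 1 ω| := lt_trans (Real.exp_pos _) hω
    have := (Real.lt_log_iff_exp_lt hpos).2 hω
    simp only [mem_setOf_eq, hX, le_max_iff]
    left; linarith
  have hTmeas : ∀ j : ℕ, MeasurableSet {ω | δ * (j : ℝ) ≤ X ω} :=
    fun j => measurableSet_le measurable_const hXmeas
  have hptail : ∀ j, p j ≤ (P {ω | δ * (j : ℝ) ≤ X ω}).toReal :=
    fun j => ENNReal.toReal_mono (measure_ne_top P _) (measure_mono (hsub2 j))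
  have hindic : ∀ ω, ∑ j ∈ Finset.Icc 1 n,
      ({ω' | δ * (j : ℝ) ≤ X ω'}.indicator (fun _ => (1:ℝ)) ω) ≤ δ⁻¹ * X ω := by
    intro ω
    classical
    have hstep : ∀ j ∈ Finset.Icc 1 n,
        ({ω' | δ * (j : ℝ) ≤ X ω'}.indicator (fun _ => (1:ℝ)) ω)
          = if δ * (j : ℝ) ≤ X ω then (1:ℝ) else 0 := by
      intro j _; simp [Set.indicator_apply]
    rw [Finset.sum_congr rfl hstep, Finset.sum_boole]
    set m : ℕ := ⌊δ⁻¹ * X ω⌋₊ with hm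
    have hsubset : (Finset.Icc 1 n).filter (fun j : ℕ => δ * (j : ℝ) ≤ X ω)
        ⊆ Finset.Icc 1 m := by
      intro j hj
      simp only [Finset.mem_filter, Finset.mem_Icc] at hj ⊢
      refine ⟨hj.1.1, Nat.le_floor ?_⟩
      have h := hj.2
      have hjd : (j : ℝ) ≤ X ω / δ := by
        rw [le_div_iff₀ hδ]; linarith [h]
      rw [hm] at *
      rw [inv_mul_eq_div]
      exact hjd
    have hcard := Finset.card_le_card hsubset
    rw [Nat.card_Icc] at hcard
    have h1 : ((Finset.Icc 1 n).filter (fun j : ℕ => δ * (j : ℝ) ≤ X ω)).card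
        ≤ m := by omega
    calc (((Finset.Icc 1 n).filter (fun j : ℕ => δ * (j : ℝ) ≤ X ω)).card : ℝ)
        ≤ (m : ℝ) := by exact_mod_cast h1
      _ ≤ δ⁻¹ * X ω := by rw [hm]; exact Nat.floor_le (by positivity)
  have hindint : ∀ j : ℕ, Integrable
      ({ω' | δ * (j : ℝ) ≤ X ω'}.indicator (fun _ => (1:ℝ))) P :=
    fun j => (integrable_const (1:ℝ)).indicator (hTmeas j)
  have hsum : ∑ j ∈ Finset.Icc 1 n, p j ≤ δ⁻¹ * ∫ ω, X ω ∂P := by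
    have h1 : ∑ j ∈ Finset.Icc 1 n, p j
        ≤ ∑ j ∈ Finset.Icc 1 n, (P {ω | δ * (j : ℝ) ≤ X ω}).toReal :=
      Finset.sum_le_sum fun j _ => hptail j
    have h2 : ∀ j : ℕ, (P {ω | δ * (j : ℝ) ≤ X ω}).toReal
        = ∫ ω, ({ω' | δ * (j : ℝ) ≤ X ω'}.indicator (fun _ => (1:ℝ)) ω) ∂P := by
      intro j
      rw [← Measure.real_def, ← integral_indicator_one (hTmeas j)]
      rfl
    have h3 : ∑ j ∈ Finset.Icc 1 n, (P {ω | δ * (j : ℝ) ≤ X ω}).toReal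
        = ∫ ω, ∑ j ∈ Finset.Icc 1 n,
            ({ω' | δ * (j : ℝ) ≤ X ω'}.indicator (fun _ => (1:ℝ)) ω) ∂P := by
      rw [integral_finset_sum _ (fun j _ => hindint j)]
      exact Finset.sum_congr rfl fun j _ => h2 j
    have h4 : ∫ ω, ∑ j ∈ Finset.Icc 1 n,
          ({ω' | δ * (j : ℝ) ≤ X ω'}.indicator (fun _ => (1:ℝ)) ω) ∂P
        ≤ ∫ ω, δ⁻¹ * X ω ∂P := by
      refine integral_mono (integrable_finset_sum _ (fun j _ => hindint j))
        (hXint.const_mul δ⁻¹) hindic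
    rw [integral_const_mul] at h4
    linarith
  -- assemble
  rw [hEeq, hprod, ENNReal.toReal_prod]
  have hfact : ∀ j ∈ Finset.Icc 1 n, (P (B j ⁻¹' s j)).toReal = 1 - p j := by
    intro j _; rw [hident j, hcompl j]
  rw [Finset.prod_congr rfl hfact]
  calc Real.exp (-2 * δ⁻¹ * ∫ ω, X ω ∂P)
      ≤ Real.exp (∑ j ∈ Finset.Icc 1 n, -(2 * p j)) := by
        apply Real.exp_le_exp.2
        rw [Finset.sum_neg_distrib, ← Finset.mul_sum,
          show (-2 * δ⁻¹ * ∫ ω, X ω ∂P) = -(2 * (δ⁻¹ * ∫ ω, X ω ∂P)) by ring]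
        exact neg_le_neg (by linarith)
    _ = ∏ j ∈ Finset.Icc 1 n, Real.exp (-(2 * p j)) := by rw [Real.exp_sum]
    _ ≤ ∏ j ∈ Finset.Icc 1 n, (1 - p j) := by
        refine Finset.prod_le_prod (fun j _ => (Real.exp_pos _).le) ?_
        exact fun j _ => exp_neg_two_le (p j) (hp_nonneg j) (hp_half j)

/-- lower bound for the probability that i.i.d. perturbations stay below an
exponentially growing barrier, and convergence of this probability to 1 as K → ∞. -/
theorem perturbation_barrier_bound {Ω : Type*} [MeasurableSpace Ω]
    (P : Measure Ω) [IsProbabilityMeasure P]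
    (B : ℕ → Ω → ℝ) (hmeas : ∀ n, Measurable (B n))
    (hiid : iIndepFun B P)
    (hid : ∀ n, IdentDistrib (B n) (B 1) P P)
    (hintB : Integrable (fun ω => Real.log (max |B 1 ω| 1)) P)
    (δ : ℝ) (hδ : 0 < δ) :
    (∀ K : ℝ, 0 < K → (P {ω | Real.log |B 1 ω| > K}).toReal < 1 / 2 →
      ∀ n : ℕ, 1 ≤ n →
        -2 * δ⁻¹ * (∫ ω, max (Real.log |B 1 ω| - K) 0 ∂P) ≤
          Real.log ((P {ω | ∀ j : ℕ, 1 ≤ j → j ≤ n →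
            |B j ω| ≤ Real.exp (δ * (j : ℝ) + K)}).toReal)) ∧
    Tendsto (fun K : ℝ =>
        (P {ω | ∀ j : ℕ, 1 ≤ j → |B j ω| ≤ Real.exp (δ * (j : ℝ) + K)}).toReal)
      atTop (nhds 1) := by
  constructor
  · intro K hK hhalf n _
    have h := core P B hmeas hiid hid hintB δ hδ K hK hhalf n
    calc -2 * δ⁻¹ * (∫ ω, max (Real.log |B 1 ω| - K) 0 ∂P)
        = Real.log (Real.exp (-2 * δ⁻¹ * (∫ ω, max (Real.log |B 1 ω| - K) 0 ∂P))) :=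
          (Real.log_exp _).symm
      _ ≤ _ := Real.log_le_log (Real.exp_pos _) h
  · -- Part 2
    set Y : Ω → ℝ := fun ω => Real.log |B 1 ω| with hY
    have hYmeas : Measurable Y := Real.measurable_log.comp (hmeas 1).abs
    -- find m₀ with P {Y > m₀} < 1/2
    have hanti : Antitone (fun m : ℕ => {ω | (m : ℝ) < Y ω}) := by
      intro a b hab ω hω
      simp only [mem_setOf_eq] at *
      exact lt_of_le_of_lt (by exact_mod_cast Nat.cast_le.2 hab) hω
    have hempty : (⋂ m : ℕ, {ω | (m : ℝ) < Y ω}) = ∅ := by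
      ext ω
      simp only [mem_iInter, mem_setOf_eq, mem_empty_iff_false, iff_false, not_forall, not_lt]
      obtain ⟨m, hm⟩ := exists_nat_gt (Y ω)
      exact ⟨m, hm.le⟩
    have htend := tendsto_measure_iInter_atTop (μ := P)
      (fun m => (measurableSet_lt measurable_const hYmeas).nullMeasurableSet)
      hanti ⟨0, measure_ne_top P _⟩
    rw [hempty, measure_empty] at htend
    obtain ⟨m₀, hm₀⟩ := (htend.eventually_lt_const
      (by norm_num : (0 : ENNReal) < 1/2)).exists
    simp only [Function.comp_apply] at hm₀
    -- half condition for K ≥ m₀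
    have hhalfK : ∀ K : ℝ, (m₀ : ℝ) ≤ K →
        (P {ω | Real.log |B 1 ω| > K}).toReal < 1 / 2 := by
      intro K hKm
      have hsub : {ω | Real.log |B 1 ω| > K} ⊆ {ω | (m₀ : ℝ) < Y ω} := by
        intro ω hω
        simp only [mem_setOf_eq, hY] at *
        linarith
      have h1 : P {ω | Real.log |B 1 ω| > K} < 1/2 :=
        lt_of_le_of_lt (measure_mono hsub) hm₀
      have h2 := ENNReal.toReal_mono (by norm_num : (1/2 : ENNReal) ≠ ⊤) h1.le
      have h3 : ((1:ENNReal)/2).toReal = (1:ℝ)/2 := by simp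
      rcases lt_or_eq_of_le h2 with h | h
      · rw [h3] at h; exact h
      · exfalso
        have := ENNReal.toReal_lt_toReal (measure_ne_top P _)
          (by norm_num : (1/2 : ENNReal) ≠ ⊤) |>.2 h1
        linarith [this, h3 ▸ this]
    -- integral tends to 0
    have hI0 : Tendsto (fun K : ℝ => ∫ ω, max (Real.log |B 1 ω| - K) 0 ∂P)
        atTop (nhds 0) := by
      have h := tendsto_integral_filter_of_dominated_convergence (μ := P) (l := (atTop : Filter ℝ))
        (F := fun (K : ℝ) ω => max (Real.log |B 1 ω| - K) 0) (f := fun _ => (0 : ℝ))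
        (bound := fun ω => Real.log (max |B 1 ω| 1))
        (Eventually.of_forall fun K =>
          (((Real.measurable_log.comp (hmeas 1).abs).sub measurable_const).max
            measurable_const).aestronglyMeasurable)
        ?_ hintB ?_
      · simpa using h
      · filter_upwards [eventually_ge_atTop (0:ℝ)] with K hK0
        refine ae_of_all _ fun ω => ?_
        rw [Real.norm_eq_abs, abs_of_nonneg (le_max_right _ _), log_max_abs]
        exact max_le_max (by linarith) le_rfl
      · refine ae_of_all _ fun ω => ?_
        have hev : ∀ᶠ K in (atTop : Filter ℝ), max (Real.log |B 1 ω| - K) 0 = 0 := by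
          filter_upwards [eventually_ge_atTop (Real.log |B 1 ω|)] with K hK
          exact max_eq_right (by linarith)
        exact tendsto_const_nhds.congr' (hev.mono fun K h => h.symm)
    have hLB : Tendsto (fun K : ℝ =>
        Real.exp (-2 * δ⁻¹ * (∫ ω, max (Real.log |B 1 ω| - K) 0 ∂P)))
        atTop (nhds 1) := by
      have h2 : Tendsto (fun K : ℝ =>
          -2 * δ⁻¹ * (∫ ω, max (Real.log |B 1 ω| - K) 0 ∂P)) atTop (nhds 0) := by
        simpa using hI0.const_mul (-2 * δ⁻¹)
      have h3 := (Real.continuous_exp.tendsto 0).comp h2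
      rw [Real.exp_zero] at h3
      exact h3
    -- measurability of the truncated events
    have hEmeas : ∀ (K : ℝ) (n : ℕ), MeasurableSet {ω | ∀ j : ℕ, 1 ≤ j → j ≤ n →
        |B j ω| ≤ Real.exp (δ * (j : ℝ) + K)} := by
      intro K n
      have heq : {ω | ∀ j : ℕ, 1 ≤ j → j ≤ n → |B j ω| ≤ Real.exp (δ * (j : ℝ) + K)}
          = ⋂ j ∈ {j : ℕ | 1 ≤ j ∧ j ≤ n}, {ω | |B j ω| ≤ Real.exp (δ * (j : ℝ) + K)} := by
        ext ω
        simp only [mem_setOf_eq, mem_iInter, and_imp]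
      rw [heq]
      exact MeasurableSet.biInter (Set.to_countable _)
        fun j _ => measurableSet_le (hmeas j).abs measurable_const
    -- squeeze
    refine tendsto_of_tendsto_of_tendsto_of_le_of_le' hLB tendsto_const_nhds ?_ ?_
    · filter_upwards [eventually_ge_atTop (max (m₀ : ℝ) 1)] with K hKge
      have hK1 : (1:ℝ) ≤ K := le_trans (le_max_right _ _) hKge
      have hKpos : 0 < K := lt_of_lt_of_le one_pos hK1
      have hhalf := hhalfK K (le_trans (le_max_left _ _) hKge)
      have hcore := fun n => core P B hmeas hiid hid hintB δ hδ K hKpos hhalf n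
      -- the infinite event as intersection
      have hQeq : {ω | ∀ j : ℕ, 1 ≤ j → |B j ω| ≤ Real.exp (δ * (j : ℝ) + K)}
          = ⋂ n : ℕ, {ω | ∀ j : ℕ, 1 ≤ j → j ≤ n →
              |B j ω| ≤ Real.exp (δ * (j : ℝ) + K)} := by
        ext ω
        simp only [mem_setOf_eq, mem_iInter]
        exact ⟨fun h n j h1 _ => h j h1, fun h j h1 => h j j h1 le_rfl⟩
      have hantiE : Antitone (fun n : ℕ => {ω | ∀ j : ℕ, 1 ≤ j → j ≤ n →
          |B j ω| ≤ Real.exp (δ * (j : ℝ) + K)}) := by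
        intro a b hab ω hω j h1 hj
        exact hω j h1 (hj.trans hab)
      have htop := tendsto_measure_iInter_atTop (μ := P)
        (fun n => (hEmeas K n).nullMeasurableSet) hantiE ⟨0, measure_ne_top P _⟩
      have hlow : ∀ n : ℕ, ENNReal.ofReal (Real.exp
          (-2 * δ⁻¹ * (∫ ω, max (Real.log |B 1 ω| - K) 0 ∂P)))
          ≤ P {ω | ∀ j : ℕ, 1 ≤ j → j ≤ n → |B j ω| ≤ Real.exp (δ * (j : ℝ) + K)} :=
        fun n => ENNReal.ofReal_le_of_le_toReal (hcore n)
      have hQ := ge_of_tendsto' htop hlow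
      rw [← hQeq] at hQ
      have := ENNReal.toReal_mono (measure_ne_top P _) hQ
      rwa [ENNReal.toReal_ofReal (Real.exp_pos _).le] at this
    · exact Eventually.of_forall fun K => by
        simpa using ENNReal.toReal_mono ENNReal.one_ne_top prob_le_one
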